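/- arXiv:1902.07672 — 4 statements merged into one kernel-verified Lean document; each statement's English description precedes it below -/
import Mathlib

section
/- Proximal gradient descent with η = c/L, 0 < c < 1, run for T = 4(η²L² + 1)Δ / (η(1 - ηL)ε²) iterations, satisfies (1/T)Σ_{t=0}^{T-1} ‖∇f(x_{t+1}) - ∇f(x_t) - (1/η)(x_{t+1} - x_t)‖² ≤ ε², and hence the uniformly sampled iterate x_R satisfies E[dist(0, ∂̂F(x_R))²] ≤ ε². -/
open RealInnerProductSpace Finset

/-- Quadratic Taylor bound for a function with `L`-Lipschitz gradient. -/
lemma pgd_quad_bound {d : ℕ} (f : EuclideanSpace ℝ (Fin d) → ℝ)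
    (f' : EuclideanSpace ℝ (Fin d) → EuclideanSpace ℝ (Fin d)) (L : ℝ) (hL : 0 < L)
    (hdiff : ∀ x, HasGradientAt f (f' x) x)
    (hlip : ∀ x y, ‖f' x - f' y‖ ≤ L * ‖x - y‖) (a b : EuclideanSpace ℝ (Fin d)) :
    |f b - f a - ⟪f' a, b - a⟫| ≤ L / 2 * ‖b - a‖ ^ 2 := by
  set v := b - a with hv
  have hcf' : Continuous f' := by
    refine (LipschitzWith.of_dist_le_mul (K := L.toNNReal) (f := f') ?_).continuous
    intro p q
    rw [dist_eq_norm, dist_eq_norm, Real.coe_toNNReal _ hL.le]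
    exact hlip p q
  have hderiv : ∀ t : ℝ, HasDerivAt (fun s : ℝ => f (a + s • v)) ⟪f' (a + t • v), v⟫ t := by
    intro t
    have h1 : HasDerivAt (fun s : ℝ => a + s • v) v t := by
      simpa using ((hasDerivAt_id t).smul_const v).const_add a
    have h2 := ((hdiff (a + t • v)).hasFDerivAt).comp_hasDerivAt t h1
    exact (by simpa using h2 : HasDerivAt (f ∘ fun s : ℝ => a + s • v) ⟪f' (a + t • v), v⟫ t)
  have hd2 : ∀ t : ℝ, HasDerivAt (fun s : ℝ => f (a + s • v) - s * ⟪f' a, v⟫)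
      (⟪f' (a + t • v), v⟫ - ⟪f' a, v⟫) t := by
    intro t
    exact (hderiv t).sub (by simpa using (hasDerivAt_id t).mul_const ⟪f' a, v⟫)
  have hcont : Continuous fun t : ℝ => ⟪f' (a + t • v), v⟫ - ⟪f' a, v⟫ :=
    (Continuous.inner (hcf'.comp (continuous_const.add (continuous_id.smul continuous_const)))
      continuous_const).sub continuous_const
  have hint : IntervalIntegrable (fun t : ℝ => ⟪f' (a + t • v), v⟫ - ⟪f' a, v⟫)
      MeasureTheory.volume 0 1 := hcont.intervalIntegrable 0 1
  have key := intervalIntegral.integral_eq_sub_of_hasDerivAt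
    (f := fun s : ℝ => f (a + s • v) - s * ⟪f' a, v⟫)
    (f' := fun t : ℝ => ⟪f' (a + t • v), v⟫ - ⟪f' a, v⟫)
    (fun t _ => hd2 t) hint
  have heq : f b - f a - ⟪f' a, v⟫ =
      ∫ t in (0:ℝ)..1, (⟪f' (a + t • v), v⟫ - ⟪f' a, v⟫) := by
    have e1 : a + (1:ℝ) • v = b := by simp [hv]
    rw [key]; simp only [e1, zero_smul, add_zero, one_mul, zero_mul, sub_zero]; ring
  rw [heq]
  have hbound : ∀ t ∈ Set.Icc (0:ℝ) 1,
      |⟪f' (a + t • v), v⟫ - ⟪f' a, v⟫| ≤ L * ‖v‖ ^ 2 * t := by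
    intro t ht
    have h1 : ⟪f' (a + t • v), v⟫ - ⟪f' a, v⟫ = ⟪f' (a + t • v) - f' a, v⟫ := by
      rw [inner_sub_left]
    rw [h1]
    calc |⟪f' (a + t • v) - f' a, v⟫| ≤ ‖f' (a + t • v) - f' a‖ * ‖v‖ :=
          abs_real_inner_le_norm _ _
      _ ≤ (L * ‖(a + t • v) - a‖) * ‖v‖ := by
          exact mul_le_mul_of_nonneg_right (hlip _ _) (norm_nonneg _)
      _ = L * ‖v‖ ^ 2 * t := by
          have : (a + t • v) - a = t • v := by abel
          rw [this, norm_smul]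
          simp [abs_of_nonneg ht.1]
          ring
  calc |∫ t in (0:ℝ)..1, (⟪f' (a + t • v), v⟫ - ⟪f' a, v⟫)|
      ≤ |∫ t in (0:ℝ)..1, L * ‖v‖ ^ 2 * t| := by
        rw [← Real.norm_eq_abs]
        refine intervalIntegral.norm_integral_le_abs_of_norm_le ?_ ?_
        · filter_upwards [MeasureTheory.ae_restrict_mem measurableSet_Ioc] with t ht
          exact hbound t ⟨le_of_lt (by simpa [Set.uIoc_of_le] using ht.1), by
            simpa [Set.uIoc_of_le] using ht.2⟩
        · exact (continuous_const.mul continuous_id).intervalIntegrable 0 1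
    _ = L / 2 * ‖v‖ ^ 2 := by
        rw [intervalIntegral.integral_const_mul, integral_id]
        rw [abs_of_nonneg (by positivity)]
        ring

/-- The Fréchet subdifferential of `h` at `x`. -/
def frechetSubdiff {d : ℕ} (h : EuclideanSpace ℝ (Fin d) → ℝ) (x : EuclideanSpace ℝ (Fin d)) :
    Set (EuclideanSpace ℝ (Fin d)) :=
  {v | ∀ ε > (0 : ℝ), ∃ δ > (0 : ℝ), ∀ y, ‖y - x‖ < δ →
    h y - h x - ⟪v, y - x⟫ ≥ -ε * ‖y - x‖}

set_option maxHeartbeats 1000000 in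
/-- Convergence of proximal gradient descent (Theorem 1): with `η = c/L`, `0 < c < 1`, and
`T = 4(η²L²+1)Δ/(η(1-ηL)ε²)` iterations, the averaged squared residual is at most `ε²`, and hence
`E[dist(0, ∂̂F(x_R))²] ≤ ε²` for a uniformly sampled iterate. -/
theorem pgd_convergence {d : ℕ} (f r : EuclideanSpace ℝ (Fin d) → ℝ)
    (f' : EuclideanSpace ℝ (Fin d) → EuclideanSpace ℝ (Fin d)) (L c η Δ ε : ℝ)
    (hL : 0 < L) (hc : 0 < c) (hc1 : c < 1) (hηdef : η = c / L)
    (hdiff : ∀ x, HasGradientAt f (f' x) x)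
    (hlip : ∀ x y, ‖f' x - f' y‖ ≤ L * ‖x - y‖)
    (x : ℕ → EuclideanSpace ℝ (Fin d))
    (hmin : ∀ t, ∀ y, r (x (t + 1)) + 1 / (2 * η) * ‖x (t + 1) - (x t - η • f' (x t))‖ ^ 2 ≤
      r y + 1 / (2 * η) * ‖y - (x t - η • f' (x t))‖ ^ 2)
    (xstar : EuclideanSpace ℝ (Fin d))
    (hstar : ∀ y, f xstar + r xstar ≤ f y + r y)
    (hΔ : (f (x 0) + r (x 0)) - (f xstar + r xstar) ≤ Δ)
    (hε : 0 < ε) (T : ℕ) (hT : (T : ℝ) = 4 * (η ^ 2 * L ^ 2 + 1) * Δ / (η * (1 - η * L) * ε ^ 2)) :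
    (1 / (T : ℝ)) * ∑ t ∈ range T,
        ‖f' (x (t + 1)) - f' (x t) - (1 / η) • (x (t + 1) - x t)‖ ^ 2 ≤ ε ^ 2 ∧
      (1 / (T : ℝ)) * ∑ t ∈ range T,
        (Metric.infDist 0 (frechetSubdiff (fun y => f y + r y) (x (t + 1)))) ^ 2 ≤ ε ^ 2 := by
  have hη : 0 < η := by rw [hηdef]; positivity
  have hηL : η * L = c := by rw [hηdef]; field_simp
  have hηL1 : η * L < 1 := by rw [hηL]; exact hc1
  set F : EuclideanSpace ℝ (Fin d) → ℝ := fun y => f y + r y with hF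
  set g : ℕ → EuclideanSpace ℝ (Fin d) :=
    fun t => f' (x (t + 1)) - f' (x t) - (1 / η) • (x (t + 1) - x t) with hg
  -- Step 1: sufficient decrease
  have hdec : ∀ t : ℕ, (1 - η * L) / (2 * η) * ‖x (t + 1) - x t‖ ^ 2 ≤
      F (x t) - F (x (t + 1)) := by
    intro t
    set p := x (t + 1)
    set q := x t
    have h1 := hmin t q
    have e1 : q - (q - η • f' q) = η • f' q := by abel
    have e2 : p - (q - η • f' q) = (p - q) + η • f' q := by abel
    rw [e1, e2, norm_add_sq_real] at h1
    have e3 : ⟪p - q, η • f' q⟫ = η * ⟪p - q, f' q⟫ := real_inner_smul_right _ _ _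
    rw [e3] at h1
    have hne : η ≠ 0 := ne_of_gt hη
    have e4 : 1 / (2 * η) * (‖p - q‖ ^ 2 + 2 * (η * ⟪p - q, f' q⟫) + ‖η • f' q‖ ^ 2)
        = 1 / (2 * η) * ‖p - q‖ ^ 2 + ⟪p - q, f' q⟫ + 1 / (2 * η) * ‖η • f' q‖ ^ 2 := by
      field_simp
    rw [e4] at h1
    have h2 : r p + 1 / (2 * η) * ‖p - q‖ ^ 2 + ⟪p - q, f' q⟫ ≤ r q := by linarith
    have h3 := pgd_quad_bound f f' L hL hdiff hlip q p
    have h4 : f p - f q - ⟪f' q, p - q⟫ ≤ L / 2 * ‖p - q‖ ^ 2 := by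
      have := abs_le.mp h3
      linarith [this.2]
    have h5 : ⟪f' q, p - q⟫ = ⟪p - q, f' q⟫ := real_inner_comm _ _
    rw [h5] at h4
    have e5 : (1 - η * L) / (2 * η) = 1 / (2 * η) - L / 2 := by field_simp
    simp only [hF]
    rw [e5]
    nlinarith [h2, h4]
  -- Step 2: residual bound
  have hres : ∀ t : ℕ, ‖g t‖ ^ 2 ≤
      (4 * (η ^ 2 * L ^ 2 + 1) / (η * (1 - η * L))) * (F (x t) - F (x (t + 1))) := by
    intro t
    set p := x (t + 1)
    set q := x t
    have hgnorm : ‖g t‖ ≤ (L + 1 / η) * ‖p - q‖ := by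
      have h1 : ‖g t‖ ≤ ‖f' p - f' q‖ + ‖(1 / η) • (p - q)‖ := norm_sub_le _ _
      have h2 : ‖(1 / η) • (p - q)‖ = (1 / η) * ‖p - q‖ := by
        rw [norm_smul, Real.norm_eq_abs, abs_of_pos (by positivity : (0:ℝ) < 1 / η)]
      calc ‖g t‖ ≤ ‖f' p - f' q‖ + ‖(1 / η) • (p - q)‖ := h1
        _ ≤ L * ‖p - q‖ + (1 / η) * ‖p - q‖ := by
            rw [h2]; exact add_le_add_left (hlip p q) _
        _ = (L + 1 / η) * ‖p - q‖ := by ring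
    have hsq : ‖g t‖ ^ 2 ≤ (L + 1 / η) ^ 2 * ‖p - q‖ ^ 2 := by
      nlinarith [norm_nonneg (g t), norm_nonneg (p - q), hgnorm,
        mul_nonneg (add_nonneg hL.le (by positivity : (0:ℝ) ≤ 1/η)) (norm_nonneg (p - q))]
    have hdect : (1 - η * L) / (2 * η) * ‖p - q‖ ^ 2 ≤ F q - F p := hdec t
    have hpos1 : (0:ℝ) < 1 - η * L := by linarith
    have hpos2 : (0:ℝ) < 2 * η := by linarith
    have hD : ‖p - q‖ ^ 2 ≤ 2 * η / (1 - η * L) * (F q - F p) := by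
      rw [div_mul_eq_mul_div, le_div_iff₀ hpos1]
      calc ‖p - q‖ ^ 2 * (1 - η * L)
          = (2 * η) * ((1 - η * L) / (2 * η) * ‖p - q‖ ^ 2) := by field_simp
        _ ≤ (2 * η) * (F q - F p) := mul_le_mul_of_nonneg_left hdect hpos2.le
    have hK : (L + 1 / η) ^ 2 * (2 * η / (1 - η * L)) ≤
        4 * (η ^ 2 * L ^ 2 + 1) / (η * (1 - η * L)) := by
      have h1 : (L + 1 / η) ^ 2 * (2 * η / (1 - η * L))
          = 2 * (η * L + 1) ^ 2 / (η * (1 - η * L)) := by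
        field_simp
      rw [h1, div_le_div_iff₀ (by positivity) (by positivity)]
      have key : 4 * (η ^ 2 * L ^ 2 + 1) * (η * (1 - η * L))
          - 2 * (η * L + 1) ^ 2 * (η * (1 - η * L))
          = 2 * ((η * (1 - η * L)) * (η * L - 1) ^ 2) := by ring
      linarith [mul_nonneg (mul_pos hη hpos1).le (sq_nonneg (η * L - 1)), key]
    have hDnn : 0 ≤ F q - F p := by
      have hnn : (0:ℝ) ≤ (1 - η * L) / (2 * η) * ‖p - q‖ ^ 2 := by positivity
      exact le_trans hnn hdect
    calc ‖g t‖ ^ 2 ≤ (L + 1 / η) ^ 2 * ‖p - q‖ ^ 2 := hsq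
      _ ≤ (L + 1 / η) ^ 2 * (2 * η / (1 - η * L) * (F q - F p)) := by
          apply mul_le_mul_of_nonneg_left hD (by positivity)
      _ = ((L + 1 / η) ^ 2 * (2 * η / (1 - η * L))) * (F q - F p) := by ring
      _ ≤ (4 * (η ^ 2 * L ^ 2 + 1) / (η * (1 - η * L))) * (F q - F p) :=
          mul_le_mul_of_nonneg_right hK hDnn
  -- Step 3: telescoping sum
  set K : ℝ := 4 * (η ^ 2 * L ^ 2 + 1) / (η * (1 - η * L)) with hKdef
  have hKnn : 0 ≤ K := by
    have hpos1 : (0:ℝ) < 1 - η * L := by linarith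
    positivity
  have hsum : ∑ t ∈ range T, ‖g t‖ ^ 2 ≤ K * Δ := by
    have h1 : ∑ t ∈ range T, ‖g t‖ ^ 2 ≤ ∑ t ∈ range T, K * (F (x t) - F (x (t + 1))) :=
      Finset.sum_le_sum fun t _ => hres t
    have h2 : ∑ t ∈ range T, K * (F (x t) - F (x (t + 1)))
        = K * (F (x 0) - F (x T)) := by
      rw [← Finset.mul_sum]
      congr 1
      exact Finset.sum_range_sub' (fun t => F (x t)) T
    have h3 : F (x 0) - F (x T) ≤ Δ := by
      have := hstar (x T)
      simp only [hF] at *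
      linarith
    calc ∑ t ∈ range T, ‖g t‖ ^ 2 ≤ K * (F (x 0) - F (x T)) := by rw [← h2]; exact h1
      _ ≤ K * Δ := mul_le_mul_of_nonneg_left h3 hKnn
  have hKΔ : K * Δ = (T : ℝ) * ε ^ 2 := by
    have hpos1 : (0:ℝ) < 1 - η * L := by linarith
    have h1 : η ≠ 0 := ne_of_gt hη
    have h2 : (1 - η * L) ≠ 0 := ne_of_gt hpos1
    have h3 : ε ≠ 0 := ne_of_gt hε
    rw [hKdef, hT]
    field_simp
  -- Conclusion
  rcases Nat.eq_zero_or_pos T with hT0 | hTpos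
  · subst hT0
    simp only [Nat.cast_zero, range_zero, sum_empty, mul_zero]
    constructor <;> positivity
  · have hTR : (0:ℝ) < (T:ℝ) := by exact_mod_cast hTpos
    have hfirst : (1 / (T : ℝ)) * ∑ t ∈ range T, ‖g t‖ ^ 2 ≤ ε ^ 2 := by
      rw [div_mul_eq_mul_div, one_mul, div_le_iff₀ hTR]
      calc ∑ t ∈ range T, ‖g t‖ ^ 2 ≤ K * Δ := hsum
        _ = (T:ℝ) * ε ^ 2 := hKΔ
        _ = ε ^ 2 * (T:ℝ) := by ring
    -- membership in subdifferential
    have hmem : ∀ t : ℕ, g t ∈ frechetSubdiff F (x (t + 1)) := by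
      intro t
      simp only [frechetSubdiff, Set.mem_setOf_eq]
      intro ε' hε'
      set p := x (t + 1)
      set q := x t
      set u := q - η • f' q with hu
      have hgu : g t = f' p - (1 / η) • (p - u) := by
        have e : p - u = (p - q) + η • f' q := by rw [hu]; abel
        rw [e, smul_add, smul_smul]
        have e2 : (1 / η) * η = 1 := by field_simp
        rw [e2, one_smul]
        show f' p - f' q - (1 / η) • (p - q) = _
        abel
      set C : ℝ := L / 2 + 1 / (2 * η) with hC
      have hCpos : 0 < C := by positivity
      refine ⟨ε' / C, by positivity, ?_⟩
      intro y hy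
      -- f part
      have h3 := pgd_quad_bound f f' L hL hdiff hlip p y
      have hfpart : f y - f p - ⟪f' p, y - p⟫ ≥ -(L / 2) * ‖y - p‖ ^ 2 := by
        have := abs_le.mp h3
        linarith [this.1]
      -- r part
      have h1 := hmin t y
      have hexp : ‖y - u‖ ^ 2 = ‖y - p‖ ^ 2 + 2 * ⟪y - p, p - u⟫ + ‖p - u‖ ^ 2 := by
        have : y - u = (y - p) + (p - u) := by abel
        rw [this, norm_add_sq_real]
      have hrpart : r y - r p ≥ -(1 / (2 * η)) * ‖y - p‖ ^ 2 - (1 / η) * ⟪p - u, y - p⟫ := by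
        have h1' : r p + 1 / (2 * η) * ‖p - u‖ ^ 2 ≤ r y + 1 / (2 * η) * ‖y - u‖ ^ 2 := h1
        rw [hexp] at h1'
        have hcm : ⟪y - p, p - u⟫ = ⟪p - u, y - p⟫ := real_inner_comm _ _
        rw [hcm] at h1'
        have e : 1 / (2 * η) * (‖y - p‖ ^ 2 + 2 * ⟪p - u, y - p⟫ + ‖p - u‖ ^ 2)
            = 1 / (2 * η) * ‖y - p‖ ^ 2 + (1 / η) * ⟪p - u, y - p⟫
              + 1 / (2 * η) * ‖p - u‖ ^ 2 := by
          field_simp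
        rw [e] at h1'
        linarith
      have hip : ⟪g t, y - p⟫ = ⟪f' p, y - p⟫ - (1 / η) * ⟪p - u, y - p⟫ := by
        rw [hgu, inner_sub_left, real_inner_smul_left]
      have hmain : F y - F p - ⟪g t, y - p⟫ ≥ -C * ‖y - p‖ ^ 2 := by
        simp only [hF]
        rw [hip, hC]
        linarith [hfpart, hrpart]
      have hfin : -C * ‖y - p‖ ^ 2 ≥ -ε' * ‖y - p‖ := by
        have hn : 0 ≤ ‖y - p‖ := norm_nonneg _
        have h5 : ‖y - p‖ * C < ε' := (lt_div_iff₀ hCpos).mp hy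
        nlinarith [h5, hn, hCpos]
      linarith
    have hsecond : (1 / (T : ℝ)) * ∑ t ∈ range T,
        (Metric.infDist 0 (frechetSubdiff F (x (t + 1)))) ^ 2 ≤ ε ^ 2 := by
      have hterm : ∀ t : ℕ, (Metric.infDist 0 (frechetSubdiff F (x (t + 1)))) ^ 2 ≤
          ‖g t‖ ^ 2 := by
        intro t
        have h1 : Metric.infDist 0 (frechetSubdiff F (x (t + 1))) ≤ dist 0 (g t) :=
          Metric.infDist_le_dist_of_mem (hmem t)
        have h2 : dist 0 (g t) = ‖g t‖ := by rw [dist_eq_norm]; simp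
        have h3 : 0 ≤ Metric.infDist 0 (frechetSubdiff F (x (t + 1))) :=
          Metric.infDist_nonneg
        nlinarith [h1, h2, h3]
      have h4 : ∑ t ∈ range T, (Metric.infDist 0 (frechetSubdiff F (x (t + 1)))) ^ 2 ≤
          ∑ t ∈ range T, ‖g t‖ ^ 2 := Finset.sum_le_sum fun t _ => hterm t
      calc (1 / (T : ℝ)) * ∑ t ∈ range T,
            (Metric.infDist 0 (frechetSubdiff F (x (t + 1)))) ^ 2
          ≤ (1 / (T : ℝ)) * ∑ t ∈ range T, ‖g t‖ ^ 2 := by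
            apply mul_le_mul_of_nonneg_left h4 (by positivity)
        _ ≤ ε ^ 2 := hfirst
    exact ⟨hfirst, hsecond⟩
end

section
/- Suppose x_{t+1} minimizes x ↦ r(x) + ⟨g_t, x - x_t⟩ + (1/(2η))‖x - x_t‖² and f is L-smooth. Then ⟨g_t - ∇f(x_t), x_{t+1} - x_t⟩ + (1/2)(1/η - L)‖x_{t+1} - x_t‖² ≤ F(x_t) - F(x_{t+1}), where F = f + r. -/
open RealInnerProductSpace

lemma descent_lemma {d : ℕ} (f : EuclideanSpace ℝ (Fin d) → ℝ)
    (f' : EuclideanSpace ℝ (Fin d) → EuclideanSpace ℝ (Fin d)) (L : ℝ) (hL : 0 < L)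
    (hdiff : ∀ x, HasGradientAt f (f' x) x)
    (hlip : ∀ x y, ‖f' x - f' y‖ ≤ L * ‖x - y‖) (x₀ x₁ : EuclideanSpace ℝ (Fin d)) :
    f x₁ ≤ f x₀ + ⟪f' x₀, x₁ - x₀⟫ + L / 2 * ‖x₁ - x₀‖ ^ 2 := by
  set v := x₁ - x₀ with hv
  set ψ : ℝ → ℝ := fun t => f x₀ + t * ⟪f' x₀, v⟫ + L * t ^ 2 / 2 * ‖v‖ ^ 2 - f (x₀ + t • v)
    with hψ
  have hline : ∀ t : ℝ, HasDerivAt (fun s : ℝ => x₀ + s • v) v t := by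
    intro t
    simpa using (hasDerivAt_id t |>.smul_const v).const_add x₀
  have hcomp : ∀ t : ℝ, HasDerivAt (fun s => f (x₀ + s • v)) ⟪f' (x₀ + t • v), v⟫ t := by
    intro t
    have h1 : HasFDerivAt f (InnerProductSpace.toDual ℝ _ (f' (x₀ + t • v))) (x₀ + t • v) :=
      (hdiff _).hasFDerivAt
    have h5 := h1.comp_hasDerivAt t (hline t)
    exact h5
  have hψ' : ∀ t : ℝ, HasDerivAt ψ
      (⟪f' x₀, v⟫ + L * t * ‖v‖ ^ 2 - ⟪f' (x₀ + t • v), v⟫) t := by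
    intro t
    have h1 : HasDerivAt (fun t : ℝ => f x₀ + t * ⟪f' x₀, v⟫ + L * t ^ 2 / 2 * ‖v‖ ^ 2)
        (⟪f' x₀, v⟫ + L * t * ‖v‖ ^ 2) t := by
      have := (((hasDerivAt_id t).mul_const ⟪f' x₀, v⟫).const_add (f x₀)).add
        ((((hasDerivAt_pow 2 t).const_mul L).div_const 2).mul_const (‖v‖ ^ 2))
      convert this using 1
      · rfl
      · rfl
      · rfl
      · ring
    exact h1.sub (hcomp t)
  have hmono : MonotoneOn ψ (Set.Icc (0:ℝ) 1) := by
    apply monotoneOn_of_hasDerivWithinAt_nonneg (convex_Icc 0 1)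
      (fun t _ => (hψ' t).continuousAt.continuousWithinAt)
      (fun t _ => (hψ' t).hasDerivWithinAt)
    intro t ht
    rw [interior_Icc] at ht
    have h2 : ‖f' x₀ - f' (x₀ + t • v)‖ ≤ L * (t * ‖v‖) := by
      have := hlip x₀ (x₀ + t • v)
      simpa [norm_smul, abs_of_nonneg ht.1.le] using this
    have h3 : |⟪f' x₀ - f' (x₀ + t • v), v⟫| ≤ L * (t * ‖v‖) * ‖v‖ :=
      (abs_real_inner_le_norm _ _).trans (by
        exact mul_le_mul_of_nonneg_right h2 (norm_nonneg v))
    rw [inner_sub_left] at h3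
    have := abs_le.mp h3
    nlinarith [this.1]
  have h01 : ψ 0 ≤ ψ 1 := hmono (by norm_num) (by norm_num) zero_le_one
  have e0 : ψ 0 = 0 := by simp [hψ]
  have e1 : ψ 1 = f x₀ + ⟪f' x₀, v⟫ + L / 2 * ‖v‖ ^ 2 - f x₁ := by
    simp [hψ, hv]
  rw [e0, e1] at h01
  linarith

/-- Per-step inequality of the stochastic proximal update: if `f` is `L`-smooth and `x₁` minimizes
`x ↦ r x + ⟪g, x - x₀⟫ + (1/(2η))‖x - x₀‖²`, then
`⟪g - ∇f x₀, x₁ - x₀⟫ + (1/2)(1/η - L)‖x₁ - x₀‖² ≤ F x₀ - F x₁` with `F = f + r`. -/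
theorem spg_per_step_inequality {d : ℕ} (f r : EuclideanSpace ℝ (Fin d) → ℝ)
    (f' : EuclideanSpace ℝ (Fin d) → EuclideanSpace ℝ (Fin d)) (L η : ℝ) (hL : 0 < L)
    (hdiff : ∀ x, HasGradientAt f (f' x) x)
    (hlip : ∀ x y, ‖f' x - f' y‖ ≤ L * ‖x - y‖) (hη : 0 < η)
    (g x₀ x₁ : EuclideanSpace ℝ (Fin d))
    (hmin : ∀ x, r x₁ + ⟪g, x₁ - x₀⟫ + 1 / (2 * η) * ‖x₁ - x₀‖ ^ 2 ≤
      r x + ⟪g, x - x₀⟫ + 1 / (2 * η) * ‖x - x₀‖ ^ 2) :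
    ⟪g - f' x₀, x₁ - x₀⟫ + 1 / 2 * (1 / η - L) * ‖x₁ - x₀‖ ^ 2 ≤
      (f x₀ + r x₀) - (f x₁ + r x₁) := by
  have h1 := hmin x₀
  simp only [sub_self, inner_zero_right, norm_zero] at h1
  have h2 := descent_lemma f f' L hL hdiff hlip x₀ x₁
  rw [inner_sub_left]
  have h3 : 1 / (2 * η) = 1 / 2 * (1 / η) := by field_simp
  nlinarith [h1, h2]
end

section
/- Under the stochastic proximal update with L-smooth f and η > 0, the iterates satisfy (1/2)(1/η - 2L)‖x_{t+1} - x_t‖² ≤ F(x_t) - F(x_{t+1}) + (1/(2L))‖g_t - ∇f(x_t)‖². -/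
open RealInnerProductSpace

set_option maxHeartbeats 1000000

/-- Stochastic proximal update decrease with variance: if `f` is `L`-smooth and `x₁` minimizes
`x ↦ r x + ⟪g, x - x₀⟫ + (1/(2η))‖x - x₀‖²`, then
`(1/2)(1/η - 2L)‖x₁ - x₀‖² ≤ F x₀ - F x₁ + (1/(2L))‖g - ∇f x₀‖²`. -/
theorem spg_decrease_with_variance {d : ℕ} (f r : EuclideanSpace ℝ (Fin d) → ℝ)
    (f' : EuclideanSpace ℝ (Fin d) → EuclideanSpace ℝ (Fin d)) (L η : ℝ) (hL : 0 < L)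
    (hdiff : ∀ x, HasGradientAt f (f' x) x)
    (hlip : ∀ x y, ‖f' x - f' y‖ ≤ L * ‖x - y‖) (hη : 0 < η)
    (g x₀ x₁ : EuclideanSpace ℝ (Fin d))
    (hmin : ∀ x, r x₁ + ⟪g, x₁ - x₀⟫ + 1 / (2 * η) * ‖x₁ - x₀‖ ^ 2 ≤
      r x + ⟪g, x - x₀⟫ + 1 / (2 * η) * ‖x - x₀‖ ^ 2) :
    1 / 2 * (1 / η - 2 * L) * ‖x₁ - x₀‖ ^ 2 ≤
      (f x₀ + r x₀) - (f x₁ + r x₁) + 1 / (2 * L) * ‖g - f' x₀‖ ^ 2 := by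
  have hdesc := descent_lemma f f' L hL hdiff hlip x₀ x₁
  have hm := hmin x₀
  rw [sub_self] at hm
  simp only [inner_zero_right, norm_zero] at hm
  have hy : ⟪f' x₀, x₁ - x₀⟫ - ⟪g, x₁ - x₀⟫ ≤
      1 / (2 * L) * ‖g - f' x₀‖ ^ 2 + L / 2 * ‖x₁ - x₀‖ ^ 2 := by
    have h1 : ⟪f' x₀ - g, x₁ - x₀⟫ ≤ ‖f' x₀ - g‖ * ‖x₁ - x₀‖ := real_inner_le_norm _ _
    rw [inner_sub_left] at h1
    have h2 : ‖f' x₀ - g‖ = ‖g - f' x₀‖ := norm_sub_rev _ _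
    rw [h2] at h1
    have key : ‖g - f' x₀‖ * ‖x₁ - x₀‖ ≤
        1 / (2 * L) * ‖g - f' x₀‖ ^ 2 + L / 2 * ‖x₁ - x₀‖ ^ 2 := by
      rw [← sub_nonneg]
      have he : 1 / (2 * L) * ‖g - f' x₀‖ ^ 2 + L / 2 * ‖x₁ - x₀‖ ^ 2 -
          ‖g - f' x₀‖ * ‖x₁ - x₀‖ = (‖g - f' x₀‖ - L * ‖x₁ - x₀‖) ^ 2 / (2 * L) := by
        field_simp; ring
      rw [he]; positivity
    linarith
  have heq : 1 / 2 * (1 / η - 2 * L) * ‖x₁ - x₀‖ ^ 2 =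
      1 / (2 * η) * ‖x₁ - x₀‖ ^ 2 - L * ‖x₁ - x₀‖ ^ 2 := by
    field_simp
  linarith
end

section
/- Under the stochastic proximal update with L-smooth f: ‖g_t - ∇f(x_{t+1}) + (1/η)(x_{t+1} - x_t)‖² ≤ 2‖g_t - ∇f(x_t)‖² + (2/η)(F(x_t) - F(x_{t+1})) + (2L² + 1/η² + 2L/η)‖x_{t+1} - x_t‖². -/
open RealInnerProductSpace

lemma descent_lower {d : ℕ} (f : EuclideanSpace ℝ (Fin d) → ℝ)
    (f' : EuclideanSpace ℝ (Fin d) → EuclideanSpace ℝ (Fin d)) (L : ℝ)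
    (hdiff : ∀ x, HasGradientAt f (f' x) x)
    (hlip : ∀ x y, ‖f' x - f' y‖ ≤ L * ‖x - y‖)
    (x y : EuclideanSpace ℝ (Fin d)) :
    f x + ⟪f' x, y - x⟫ - L / 2 * ‖y - x‖ ^ 2 ≤ f y := by
  set δ := y - x with hδ
  set q : ℝ → ℝ := fun t => f (x + t • δ) - t * ⟪f' x, δ⟫ + L * ‖δ‖ ^ 2 * t ^ 2 / 2 with hqdef
  have hq : ∀ t : ℝ, HasDerivAt q
      (⟪f' (x + t • δ), δ⟫ - ⟪f' x, δ⟫ + L * ‖δ‖ ^ 2 * t) t := by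
    intro t
    have hline : HasDerivAt (fun t : ℝ => x + t • δ) δ t := by
      simpa using ((hasDerivAt_id t).smul_const δ).const_add x
    have h1 : HasDerivAt (fun t : ℝ => f (x + t • δ)) ⟪f' (x + t • δ), δ⟫ t := by
      have h := ((hasGradientAt_iff_hasFDerivAt.mp
        (hdiff (x + t • δ))).comp_hasDerivAt t hline)
      exact h
    have h2 : HasDerivAt (fun t : ℝ => t * ⟪f' x, δ⟫) ⟪f' x, δ⟫ t := by
      simpa using (hasDerivAt_id t).mul_const (⟪f' x, δ⟫ : ℝ)
    have h3 : HasDerivAt (fun t : ℝ => L * ‖δ‖ ^ 2 * t ^ 2 / 2) (L * ‖δ‖ ^ 2 * t) t := by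
      have := ((hasDerivAt_pow 2 t).const_mul (L * ‖δ‖ ^ 2)).div_const 2
      convert this using 1
      exacts [rfl, rfl, by ring]
    exact (h1.sub h2).add h3
  have hmono : MonotoneOn q (Set.Icc (0 : ℝ) 1) := by
    apply monotoneOn_of_deriv_nonneg (convex_Icc 0 1)
    · exact (Differentiable.continuous (fun t => (hq t).differentiableAt)).continuousOn
    · exact fun t _ => ((hq t).differentiableAt).differentiableWithinAt
    · intro t ht
      rw [interior_Icc] at ht
      rw [(hq t).deriv]
      have hcs : |⟪f' (x + t • δ) - f' x, δ⟫| ≤ ‖f' (x + t • δ) - f' x‖ * ‖δ‖ :=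
        abs_real_inner_le_norm _ _
      have hl := hlip (x + t • δ) x
      have hn : ‖x + t • δ - x‖ = t * ‖δ‖ := by
        simp [norm_smul, abs_of_pos ht.1]
      rw [hn] at hl
      have hsub : ⟪f' (x + t • δ) - f' x, δ⟫ = ⟪f' (x + t • δ), δ⟫ - ⟪f' x, δ⟫ :=
        inner_sub_left _ _ _
      have habs := (abs_le.mp hcs).1
      nlinarith [norm_nonneg δ, norm_nonneg (f' (x + t • δ) - f' x), ht.1.le]
  have h01 := hmono (Set.mem_Icc.mpr ⟨le_refl 0, zero_le_one⟩)
    (Set.mem_Icc.mpr ⟨zero_le_one, le_refl 1⟩) zero_le_one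
  have hq0 : q 0 = f x := by simp [hqdef]
  have hq1 : q 1 = f y - ⟪f' x, δ⟫ + L * ‖δ‖ ^ 2 / 2 := by
    simp [hqdef, hδ]
  rw [hq0, hq1] at h01
  linarith
/-- Bound on the subgradient residual of the stochastic proximal update:
`‖g - ∇f x₁ + (1/η)(x₁ - x₀)‖² ≤ 2‖g - ∇f x₀‖² + (2/η)(F x₀ - F x₁)
  + (2L² + 1/η² + 2L/η)‖x₁ - x₀‖²`. -/
theorem spg_residual_bound {d : ℕ} (f r : EuclideanSpace ℝ (Fin d) → ℝ)
    (f' : EuclideanSpace ℝ (Fin d) → EuclideanSpace ℝ (Fin d)) (L η : ℝ) (hL : 0 < L)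
    (hdiff : ∀ x, HasGradientAt f (f' x) x)
    (hlip : ∀ x y, ‖f' x - f' y‖ ≤ L * ‖x - y‖) (hη : 0 < η)
    (g x₀ x₁ : EuclideanSpace ℝ (Fin d))
    (hmin : ∀ x, r x₁ + ⟪g, x₁ - x₀⟫ + 1 / (2 * η) * ‖x₁ - x₀‖ ^ 2 ≤
      r x + ⟪g, x - x₀⟫ + 1 / (2 * η) * ‖x - x₀‖ ^ 2) :
    ‖g - f' x₁ + (1 / η) • (x₁ - x₀)‖ ^ 2 ≤
      2 * ‖g - f' x₀‖ ^ 2 + 2 / η * ((f x₀ + r x₀) - (f x₁ + r x₁)) +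
        (2 * L ^ 2 + 1 / η ^ 2 + 2 * L / η) * ‖x₁ - x₀‖ ^ 2 := by
  set δ := x₁ - x₀ with hδ
  -- optimality at x₀
  have hA : r x₁ + ⟪g, δ⟫ + 1 / (2 * η) * ‖δ‖ ^ 2 ≤ r x₀ := by
    have := hmin x₀
    simpa using this
  -- descent lemma (lower bound form) at x₁ evaluated at x₀
  have hB : f x₁ - f x₀ ≤ ⟪f' x₁, δ⟫ + L / 2 * ‖δ‖ ^ 2 := by
    have h := descent_lower f f' L hdiff hlip x₁ x₀
    have h1 : ⟪f' x₁, x₀ - x₁⟫ = -⟪f' x₁, δ⟫ := by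
      rw [hδ, ← inner_neg_right]; congr 1; abel
    have h2 : ‖x₀ - x₁‖ = ‖δ‖ := by rw [hδ, ← norm_neg]; congr 1; abel
    rw [h1, h2] at h
    linarith
  -- bound on ‖g - f' x₁‖²
  have hC : ‖g - f' x₁‖ ^ 2 ≤ 2 * ‖g - f' x₀‖ ^ 2 + 2 * (L * ‖δ‖) ^ 2 := by
    have htri : ‖g - f' x₁‖ ≤ ‖g - f' x₀‖ + ‖f' x₀ - f' x₁‖ := by
      have := norm_add_le (g - f' x₀) (f' x₀ - f' x₁)
      simpa [sub_add_sub_cancel] using this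
    have hl : ‖f' x₀ - f' x₁‖ ≤ L * ‖x₀ - x₁‖ := hlip x₀ x₁
    have h2 : ‖x₀ - x₁‖ = ‖δ‖ := by rw [hδ, ← norm_neg]; congr 1; abel
    rw [h2] at hl
    have hsq : ‖g - f' x₁‖ ^ 2 ≤ (‖g - f' x₀‖ + ‖f' x₀ - f' x₁‖) ^ 2 :=
      pow_le_pow_left₀ (norm_nonneg _) htri 2
    nlinarith [sq_nonneg (‖g - f' x₀‖ - ‖f' x₀ - f' x₁‖), norm_nonneg (g - f' x₀),
      norm_nonneg (f' x₀ - f' x₁), mul_nonneg hL.le (norm_nonneg δ)]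
  -- expand the LHS
  have hexp : ‖g - f' x₁ + (1 / η) • δ‖ ^ 2 =
      ‖g - f' x₁‖ ^ 2 + 2 * ((1 / η) * ⟪g - f' x₁, δ⟫) + (1 / η) ^ 2 * ‖δ‖ ^ 2 := by
    rw [norm_add_sq_real, real_inner_smul_right, norm_smul]
    rw [Real.norm_eq_abs, abs_of_pos (by positivity : (0:ℝ) < 1 / η)]
    ring
  rw [hexp]
  have hinner : ⟪g - f' x₁, δ⟫ = ⟪g, δ⟫ - ⟪f' x₁, δ⟫ := inner_sub_left _ _ _
  have hη1 : (0:ℝ) < 1 / η := by positivity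
  have hη2 : (1:ℝ) / η ^ 2 = (1 / η) ^ 2 := by field_simp
  have hη3 : 2 * L / η = 2 * L * (1 / η) := by ring
  have hη4 : (2:ℝ) / η = 2 * (1 / η) := by ring
  have hη5 : 1 / (2 * η) = (1 / η) / 2 := by ring
  rw [hη5] at hA
  rw [hη2, hη3, hη4]
  -- combine: (2/η)⟪g - f'x₁, δ⟫ ≤ (2/η)(F₀-F₁) + (L/η - 1/η²)‖δ‖²
  have hkey : (1 / η) * ⟪g - f' x₁, δ⟫ ≤
      (1 / η) * ((f x₀ + r x₀) - (f x₁ + r x₁)) +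
        (1 / η) * (L / 2 * ‖δ‖ ^ 2) - (1 / η) * ((1 / η) / 2 * ‖δ‖ ^ 2) := by
    rw [hinner]
    have : ⟪g, δ⟫ - ⟪f' x₁, δ⟫ ≤ ((f x₀ + r x₀) - (f x₁ + r x₁)) +
        L / 2 * ‖δ‖ ^ 2 - (1 / η) / 2 * ‖δ‖ ^ 2 := by linarith
    nlinarith [hη1]
  nlinarith [hkey, hC, mul_nonneg (sq_nonneg (1/η)) (sq_nonneg ‖δ‖),
    mul_nonneg (mul_nonneg hL.le hη1.le) (sq_nonneg ‖δ‖)]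
end
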